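/- Let f be an isometric embedding of the Johnson graph J(l,m) into the Grassmann graph Γ_k(V), with 1 < m < l-1 and 1 < k < n-1. Then every maximal clique of the induced subgraph on the image of f is contained in exactly one maximal clique of Γ_k(V). -/

import Mathlib

open Module

/-- The Grassmann graph `Γ_k(V)`. -/
def GrassmannGraph (K V : Type*) [DivisionRing K] [AddCommGroup V] [Module K V] (k : ℕ) :
    SimpleGraph {S : Submodule K V // finrank K S = k} where
  Adj S U := S ≠ U ∧ finrank K ↥(S.1 ⊓ U.1) = k - 1
  symm := by
    constructor
    rintro S U ⟨h1, h2⟩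
    refine ⟨h1.symm, ?_⟩
    rwa [inf_comm]
  loopless := by constructor; rintro S ⟨h, -⟩; exact h rfl

/-- The Johnson graph `J(l,m)`. -/
def JohnsonGraph (l m : ℕ) : SimpleGraph {A : Finset (Fin l) // A.card = m} where
  Adj A B := A ≠ B ∧ (A.1 ∩ B.1).card = m - 1
  symm := by
    constructor
    rintro A B ⟨h1, h2⟩
    refine ⟨h1.symm, ?_⟩
    rwa [Finset.inter_comm]
  loopless := by constructor; rintro A ⟨h, -⟩; exact h rfl


section Grassmann
variable {K V : Type*} [DivisionRing K] [AddCommGroup V] [Module K V] [FiniteDimensional K V]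
variable {k : ℕ}

lemma grass_eq_or_adj (hk : 1 ≤ k) {S U : {S : Submodule K V // finrank K S = k}}
    (h : k - 1 ≤ finrank K ↥(S.1 ⊓ U.1)) :
    S = U ∨ (GrassmannGraph K V k).Adj S U := by
  by_cases he : S = U
  · exact Or.inl he
  · refine Or.inr ⟨he, ?_⟩
    have h1 : S.1 ⊓ U.1 ≤ S.1 := inf_le_left
    have h2 : finrank K ↥(S.1 ⊓ U.1) ≤ k := by have := Submodule.finrank_mono (R:=K) h1; rwa [S.2] at this
    rcases eq_or_lt_of_le h2 with heq | hlt
    · exfalso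
      have e1 : S.1 ⊓ U.1 = S.1 := Submodule.eq_of_le_of_finrank_eq h1 (by rw [heq, S.2])
      have e2 : S.1 ≤ U.1 := by rw [← e1]; exact inf_le_right
      exact he (Subtype.ext (Submodule.eq_of_le_of_finrank_eq e2 (by rw [S.2, U.2])))
    · omega

lemma grass_trichotomy (hk : 2 ≤ k) {S S1 S2 : Submodule K V}
    (dS : finrank K S = k) (d1 : finrank K S1 = k) (d2 : finrank K S2 = k)
    (a1 : finrank K ↥(S ⊓ S1) = k - 1) (a2 : finrank K ↥(S ⊓ S2) = k - 1)
    (a12 : finrank K ↥(S1 ⊓ S2) = k - 1) :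
    S1 ⊓ S2 ≤ S ∨ S ≤ S1 ⊔ S2 := by
  have hab : (S ⊓ S1) ⊓ (S ⊓ S2) = S ⊓ (S1 ⊓ S2) := (inf_inf_distrib_left S S1 S2).symm
  have key := Submodule.finrank_sup_add_finrank_inf_eq (S ⊓ S1) (S ⊓ S2)
  rw [hab, a1, a2] at key
  have hle : (S ⊓ S1) ⊔ (S ⊓ S2) ≤ S := sup_le inf_le_left inf_le_left
  have hsup : finrank K ↥((S ⊓ S1) ⊔ (S ⊓ S2)) ≤ k := by have := Submodule.finrank_mono (R:=K) hle; rwa [dS] at this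
  have hXle : S ⊓ (S1 ⊓ S2) ≤ S1 ⊓ S2 := inf_le_right
  have hXcard : finrank K ↥(S ⊓ (S1 ⊓ S2)) ≤ k - 1 := by have := Submodule.finrank_mono (R:=K) hXle; rwa [a12] at this
  by_cases hc : finrank K ↥(S ⊓ (S1 ⊓ S2)) = k - 1
  · left
    have := Submodule.eq_of_le_of_finrank_eq hXle (by rw [hc, a12])
    calc S1 ⊓ S2 = S ⊓ (S1 ⊓ S2) := this.symm
      _ ≤ S := inf_le_left
  · right
    have h1 : finrank K ↥((S ⊓ S1) ⊔ (S ⊓ S2)) = k := by omega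
    have := Submodule.eq_of_le_of_finrank_eq hle (by rw [h1, dS])
    calc S = (S ⊓ S1) ⊔ (S ⊓ S2) := this.symm
      _ ≤ S1 ⊔ S2 := sup_le_sup inf_le_right inf_le_right

end Grassmann
section Johnson

lemma johnson_trichotomy {l m : ℕ} {A B C : Finset (Fin l)} (hm : 2 ≤ m)
    (cA : A.card = m) (cB : B.card = m) (cC : C.card = m)
    (iAB : (A ∩ B).card = m - 1) (iAC : (A ∩ C).card = m - 1) (iBC : (B ∩ C).card = m - 1) :
    B ∩ C ⊆ A ∨ A ⊆ B ∪ C := by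
  have hab : (A ∩ B) ∩ (A ∩ C) = A ∩ (B ∩ C) := by
    ext x; simp only [Finset.mem_inter]; tauto
  have key := Finset.card_union_add_card_inter (A ∩ B) (A ∩ C)
  rw [hab, iAB, iAC] at key
  have hle : (A ∩ B) ∪ (A ∩ C) ⊆ A := Finset.union_subset Finset.inter_subset_left Finset.inter_subset_left
  have hsup : ((A ∩ B) ∪ (A ∩ C)).card ≤ m := cA ▸ Finset.card_le_card hle
  have hXle : A ∩ (B ∩ C) ⊆ B ∩ C := Finset.inter_subset_right
  have hXcard : (A ∩ (B ∩ C)).card ≤ m - 1 := iBC ▸ Finset.card_le_card hXle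
  by_cases hc : (A ∩ (B ∩ C)).card = m - 1
  · left
    have heq : A ∩ (B ∩ C) = B ∩ C := Finset.eq_of_subset_of_card_le hXle (by omega)
    rw [← heq]; exact Finset.inter_subset_left
  · right
    have h1 : ((A ∩ B) ∪ (A ∩ C)).card = m := by omega
    have heq : (A ∩ B) ∪ (A ∩ C) = A := Finset.eq_of_subset_of_card_le hle (by omega)
    rw [← heq]
    exact Finset.union_subset_union Finset.inter_subset_right Finset.inter_subset_right

lemma johnson_reachable_aux {l m : ℕ} : ∀ (d : ℕ) (A B : Finset (Fin l)) (hA : A.card = m)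
    (hB : B.card = m), (A \ B).card = d → (JohnsonGraph l m).Reachable ⟨A, hA⟩ ⟨B, hB⟩ := by
  intro d
  induction d with
  | zero =>
    intro A B hA hB h
    have : A = B := Finset.eq_of_subset_of_card_le
      ((Finset.sdiff_eq_empty_iff_subset).1 (Finset.card_eq_zero.1 h)) (by omega)
    subst this
    rfl
  | succ d ih =>
    intro A B hA hB h
    have ha : (A \ B).Nonempty := by rw [← Finset.card_pos, h]; omega
    obtain ⟨a, haa⟩ := ha
    have haA : a ∈ A := (Finset.mem_sdiff.1 haa).1
    have haB : a ∉ B := (Finset.mem_sdiff.1 haa).2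
    have hcb : (B \ A).card = d + 1 := by
      have h1 := Finset.card_sdiff_add_card_inter A B
      have h2 := Finset.card_sdiff_add_card_inter B A
      rw [Finset.inter_comm B A] at h2
      omega
    have hb : (B \ A).Nonempty := by rw [← Finset.card_pos, hcb]; omega
    obtain ⟨b, hbb⟩ := hb
    have hbB : b ∈ B := (Finset.mem_sdiff.1 hbb).1
    have hbA : b ∉ A := (Finset.mem_sdiff.1 hbb).2
    have hba : b ≠ a := fun h => hbA (h ▸ haA)
    set A₂ : Finset (Fin l) := insert b (A.erase a) with hA₂
    have hbea : b ∉ A.erase a := fun h => hbA (Finset.mem_of_mem_erase h)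
    have hA₂c : A₂.card = m := by
      rw [hA₂, Finset.card_insert_of_notMem hbea, Finset.card_erase_of_mem haA]
      have : 1 ≤ A.card := Finset.card_pos.2 ⟨a, haA⟩
      omega
    have hinter : A ∩ A₂ = A.erase a := by
      ext x
      simp only [hA₂, Finset.mem_inter, Finset.mem_insert, Finset.mem_erase]
      constructor
      · rintro ⟨hx, hx2 | hx2⟩
        · exact absurd (hx2 ▸ hx) hbA
        · exact hx2
      · rintro ⟨hx1, hx2⟩; exact ⟨hx2, Or.inr ⟨hx1, hx2⟩⟩
    have hne : A ≠ A₂ := by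
      intro h
      have : b ∈ A := by rw [h, hA₂]; exact Finset.mem_insert_self b _
      exact hbA this
    have hadj : (JohnsonGraph l m).Adj ⟨A, hA⟩ ⟨A₂, hA₂c⟩ := by
      refine ⟨fun h => hne (congrArg Subtype.val h), ?_⟩
      show (A ∩ A₂).card = m - 1
      rw [hinter, Finset.card_erase_of_mem haA, hA]
    have hsd : (A₂ \ B).card = d := by
      have : A₂ \ B = (A \ B).erase a := by
        ext x
        simp only [hA₂, Finset.mem_sdiff, Finset.mem_insert, Finset.mem_erase]
        constructor
        · rintro ⟨hx1 | hx1, hx2⟩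
          · exact absurd (hx1 ▸ hbB) hx2
          · exact ⟨hx1.1, hx1.2, hx2⟩
        · rintro ⟨hx1, hx2, hx3⟩; exact ⟨Or.inr ⟨hx1, hx2⟩, hx3⟩
      rw [this, Finset.card_erase_of_mem haa, h]
      omega
    exact (hadj.reachable).trans (ih A₂ B hA₂c hB hsd)

lemma johnson_reachable {l m : ℕ} (A B : {A : Finset (Fin l) // A.card = m}) :
    (JohnsonGraph l m).Reachable A B := by
  obtain ⟨A, hA⟩ := A; obtain ⟨B, hB⟩ := B
  exact johnson_reachable_aux _ A B hA hB rfl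

lemma johnson_dist_two {l m : ℕ} (hm : 2 ≤ m) (A B : {A : Finset (Fin l) // A.card = m})
    (h : (A.1 ∩ B.1).card = m - 2) : (JohnsonGraph l m).dist A B = 2 := by
  have hne : A ≠ B := by
    intro he
    rw [he, Finset.inter_self, B.2] at h
    omega
  have hnadj : ¬ (JohnsonGraph l m).Adj A B := by
    rintro ⟨-, h2⟩
    rw [h] at h2
    omega
  -- middle vertex
  have hAB : (A.1 \ B.1).card = 2 := by
    have := Finset.card_sdiff_add_card_inter A.1 B.1
    rw [h, A.2] at this
    omega
  have hBA : (B.1 \ A.1).card = 2 := by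
    have := Finset.card_sdiff_add_card_inter B.1 A.1
    rw [Finset.inter_comm, h, B.2] at this
    omega
  obtain ⟨a, haa⟩ : (A.1 \ B.1).Nonempty := by rw [← Finset.card_pos, hAB]; omega
  obtain ⟨b, hbb⟩ : (B.1 \ A.1).Nonempty := by rw [← Finset.card_pos, hBA]; omega
  have haA : a ∈ A.1 := (Finset.mem_sdiff.1 haa).1
  have haB : a ∉ B.1 := (Finset.mem_sdiff.1 haa).2
  have hbB : b ∈ B.1 := (Finset.mem_sdiff.1 hbb).1
  have hbA : b ∉ A.1 := (Finset.mem_sdiff.1 hbb).2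
  have hbe : a ∉ B.1.erase b := fun hx => haB (Finset.mem_of_mem_erase hx)
  set Mid : Finset (Fin l) := insert a (B.1.erase b) with hMid
  have hMc : Mid.card = m := by
    rw [hMid, Finset.card_insert_of_notMem hbe, Finset.card_erase_of_mem hbB, B.2]
    omega
  have hi1 : B.1 ∩ Mid = B.1.erase b := by
    ext x
    simp only [hMid, Finset.mem_inter, Finset.mem_insert, Finset.mem_erase]
    constructor
    · rintro ⟨hx, hx2 | hx2⟩
      · exact absurd (hx2 ▸ hx) haB
      · exact hx2
    · rintro ⟨hx1, hx2⟩; exact ⟨hx2, Or.inr ⟨hx1, hx2⟩⟩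
  have hi2 : Mid ∩ A.1 = insert a (B.1 ∩ A.1) := by
    ext x
    simp only [hMid, Finset.mem_inter, Finset.mem_insert, Finset.mem_erase]
    constructor
    · rintro ⟨hx1 | hx1, hx2⟩
      · exact Or.inl hx1
      · exact Or.inr ⟨hx1.2, hx2⟩
    · rintro (hx | ⟨hx1, hx2⟩)
      · exact ⟨Or.inl hx, hx ▸ haA⟩
      · refine ⟨Or.inr ⟨fun he => hbA (he ▸ hx2), hx1⟩, hx2⟩
  have hcard1 : (A.1 ∩ Mid).card = m - 1 := by
    rw [Finset.inter_comm, hi2, Finset.card_insert_of_notMem (fun hx => haB (Finset.mem_inter.1 hx).1), Finset.inter_comm, h]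
    omega
  have hadj1 : (JohnsonGraph l m).Adj A ⟨Mid, hMc⟩ := by
    refine ⟨?_, hcard1⟩
    intro he
    have heq : A.1 = Mid := congrArg Subtype.val he
    rw [← heq, Finset.inter_self, A.2] at hcard1
    omega
  have hadj2 : (JohnsonGraph l m).Adj ⟨Mid, hMc⟩ B := by
    refine ⟨?_, ?_⟩
    · intro he
      have hm2 : a ∈ Mid := Finset.mem_insert_self a _
      have heq : Mid = B.1 := congrArg Subtype.val he
      exact haB (heq ▸ hm2)
    · show (Mid ∩ B.1).card = m - 1
      rw [Finset.inter_comm, hi1, Finset.card_erase_of_mem hbB, B.2]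
  have hle : (JohnsonGraph l m).dist A B ≤ 2 := by
    have ht := SimpleGraph.dist_le (SimpleGraph.Walk.cons hadj1 hadj2.toWalk)
    simpa using ht
  have hpos : 0 < (JohnsonGraph l m).dist A B :=
    (johnson_reachable A B).pos_dist_of_ne hne
  have hone : (JohnsonGraph l m).dist A B ≠ 1 := by
    intro h1
    exact hnadj (SimpleGraph.dist_eq_one_iff_adj.1 h1)
  omega

end Johnson
lemma johnson_adj_of_card {l m : ℕ} (hm : 1 ≤ m) {A B : {A : Finset (Fin l) // A.card = m}}
    (h : (A.1 ∩ B.1).card = m - 1) : (JohnsonGraph l m).Adj A B := by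
  refine ⟨fun he => ?_, h⟩
  rw [he, Finset.inter_self, B.2] at h
  omega

section Grassmann2
variable {K V : Type*} [DivisionRing K] [AddCommGroup V] [Module K V] [FiniteDimensional K V]
variable {k : ℕ}

lemma grass_finrank_sup (hk : 1 ≤ k) {S U : Submodule K V} (dS : finrank K S = k)
    (dU : finrank K U = k) (h : finrank K ↥(S ⊓ U) = k - 1) :
    finrank K ↥(S ⊔ U) = k + 1 := by
  have key := Submodule.finrank_sup_add_finrank_inf_eq S U
  rw [h, dS, dU] at key
  omega

end Grassmann2
set_option maxHeartbeats 2000000 in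
theorem stmt12 (K V : Type*) [DivisionRing K] [AddCommGroup V] [Module K V]
    [FiniteDimensional K V] (n k l m : ℕ) (hn : finrank K V = n)
    (hn4 : 4 ≤ n) (hl4 : 4 ≤ l) (hk1 : 1 < k) (hk2 : k < n - 1)
    (hm1 : 1 < m) (hm2 : m < l - 1)
    (f : {A : Finset (Fin l) // A.card = m} → {S : Submodule K V // finrank K S = k})
    (hf : ∀ A B, (GrassmannGraph K V k).dist (f A) (f B) = (JohnsonGraph l m).dist A B)
    (C : Set {S : Submodule K V // finrank K S = k})
    (hCsub : C ⊆ Set.range f)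
    (hC : (GrassmannGraph K V k).IsClique C)
    (hCmax : ∀ D, D ⊆ Set.range f → (GrassmannGraph K V k).IsClique D → C ⊆ D → C = D) :
    ∃! D : Set {S : Submodule K V // finrank K S = k},
      (GrassmannGraph K V k).IsClique D ∧
      (∀ E, (GrassmannGraph K V k).IsClique E → D ⊆ E → D = E) ∧
      C ⊆ D := by
  have hm2' : 2 ≤ m := hm1
  have hml : m + 1 < l := by omega
  -- Stage A : transfers along f
  have fne : ∀ {A B : {A : Finset (Fin l) // A.card = m}}, A ≠ B → f A ≠ f B := by
    intro A B hAB hfe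
    have hd := (johnson_reachable A B).pos_dist_of_ne hAB
    rw [← hf] at hd
    rw [hfe, SimpleGraph.dist_self] at hd
    omega
  have fadj : ∀ {A B : {A : Finset (Fin l) // A.card = m}}, (JohnsonGraph l m).Adj A B →
      (GrassmannGraph K V k).Adj (f A) (f B) := by
    intro A B h
    have h1 : (JohnsonGraph l m).dist A B = 1 := SimpleGraph.dist_eq_one_iff_adj.2 h
    exact SimpleGraph.dist_eq_one_iff_adj.1 (by rw [hf]; exact h1)
  have fadj' : ∀ {A B : {A : Finset (Fin l) // A.card = m}},
      (GrassmannGraph K V k).Adj (f A) (f B) → (JohnsonGraph l m).Adj A B := by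
    intro A B h
    have h1 : (GrassmannGraph K V k).dist (f A) (f B) = 1 := SimpleGraph.dist_eq_one_iff_adj.2 h
    exact SimpleGraph.dist_eq_one_iff_adj.1 (by rw [← hf]; exact h1)
  have fdist2 : ∀ {A B : {A : Finset (Fin l) // A.card = m}},
      (A.1 ∩ B.1).card = m - 2 → f A ≠ f B ∧ ¬ (GrassmannGraph K V k).Adj (f A) (f B) := by
    intro A B h
    have hd : (GrassmannGraph K V k).dist (f A) (f B) = 2 := by
      rw [hf]; exact johnson_dist_two hm2' A B h
    constructor
    · intro he; rw [he, SimpleGraph.dist_self] at hd; omega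
    · intro ha
      have := SimpleGraph.dist_eq_one_iff_adj.2 ha
      omega
  -- Stage B : pull back the clique
  set C' : Set {A : Finset (Fin l) // A.card = m} := f ⁻¹' C with hC'def
  have hCim : C = f '' C' := by
    apply Set.Subset.antisymm
    · intro c hc
      obtain ⟨A, hA⟩ := hCsub hc
      exact ⟨A, by rw [hC'def, Set.mem_preimage, hA]; exact hc, hA⟩
    · rintro c ⟨A, hA1, rfl⟩
      exact hA1
  have hC'clique : (JohnsonGraph l m).IsClique C' := by
    intro A hA B hB hAB
    exact fadj' (hC hA hB (fne hAB))
  have himg_clique : ∀ D' : Set {A : Finset (Fin l) // A.card = m},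
      (JohnsonGraph l m).IsClique D' → (GrassmannGraph K V k).IsClique (f '' D') := by
    rintro D' hD' _ ⟨A, hA, rfl⟩ _ ⟨B, hB, rfl⟩ hne
    have hAB : A ≠ B := fun h => hne (congrArg f h)
    exact fadj (hD' hA hB hAB)
  have hC'max : ∀ D', (JohnsonGraph l m).IsClique D' → C' ⊆ D' → C' = D' := by
    intro D' hD'c hsub
    have h1 : C = f '' D' := by
      apply hCmax _ (by rintro _ ⟨A, _, rfl⟩; exact ⟨A, rfl⟩) (himg_clique D' hD'c)
      rw [hCim]; exact Set.image_mono hsub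
    apply Set.Subset.antisymm hsub
    intro B hB
    show f B ∈ C
    rw [h1]; exact ⟨B, hB, rfl⟩
  -- Stage C : C' has two distinct elements
  have hvert : ∃ A0 : Finset (Fin l), A0.card = m := by
    obtain ⟨t, _, ht⟩ := Finset.exists_subset_card_eq (s := (Finset.univ : Finset (Fin l))) (n := m)
      (by simp; omega)
    exact ⟨t, ht⟩
  obtain ⟨A0, hA0⟩ := hvert
  have hC'ne : C'.Nonempty := by
    by_contra hne
    rw [Set.not_nonempty_iff_eq_empty] at hne
    have hCe : C = ∅ := by rw [hCim, hne, Set.image_empty]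
    have := hCmax {f ⟨A0, hA0⟩} (by rintro _ rfl; exact ⟨_, rfl⟩)
      (by intro x hx y hy hxy; rw [Set.mem_singleton_iff] at hx hy; rw [hx, hy] at hxy; exact absurd rfl hxy)
      (by rw [hCe]; exact Set.empty_subset _)
    rw [hCe] at this
    exact (Set.singleton_ne_empty _) this.symm
  obtain ⟨A, hA⟩ := hC'ne
  have htwo : ∃ A' ∈ C', A' ≠ A := by
    by_contra hone
    push_neg at hone
    -- build a neighbour of A
    obtain ⟨x, hx⟩ : A.1.Nonempty := by rw [← Finset.card_pos, A.2]; omega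
    obtain ⟨y, hy⟩ : (A.1ᶜ : Finset (Fin l)).Nonempty := by
      rw [← Finset.card_pos, Finset.card_compl, A.2]
      simp only [Fintype.card_fin]; omega
    have hyA : y ∉ A.1 := Finset.mem_compl.1 hy
    have hyx : y ≠ x := fun h => hyA (h ▸ hx)
    have hyerase : y ∉ A.1.erase x := fun h => hyA (Finset.mem_of_mem_erase h)
    have hcard : (insert y (A.1.erase x)).card = m := by
      rw [Finset.card_insert_of_notMem hyerase, Finset.card_erase_of_mem hx, A.2]; omega
    set A'' : {A : Finset (Fin l) // A.card = m} := ⟨insert y (A.1.erase x), hcard⟩ with hA''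
    have hinter : (A.1 ∩ A''.1).card = m - 1 := by
      have : A.1 ∩ A''.1 = A.1.erase x := by
        ext z
        simp only [hA'', Finset.mem_inter, Finset.mem_insert, Finset.mem_erase]
        constructor
        · rintro ⟨hz, hz2 | hz2⟩
          · exact absurd (hz2 ▸ hz) hyA
          · exact hz2
        · rintro ⟨hz1, hz2⟩; exact ⟨hz2, Or.inr ⟨hz1, hz2⟩⟩
      rw [this, Finset.card_erase_of_mem hx, A.2]
    have hadj : (JohnsonGraph l m).Adj A A'' := johnson_adj_of_card (by omega) hinter
    have hclique : (JohnsonGraph l m).IsClique (C' ∪ {A''}) := by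
      intro u hu v hv huv
      rcases hu with hu | hu <;> rcases hv with hv | hv
      · exact hC'clique hu hv huv
      · rw [Set.mem_singleton_iff] at hv
        rw [hone u hu, hv]; exact hadj
      · rw [Set.mem_singleton_iff] at hu
        rw [hone v hv, hu]; exact hadj.symm
      · rw [Set.mem_singleton_iff] at hu hv; rw [hu, hv] at huv; exact absurd rfl huv
    have := hC'max _ hclique (Set.subset_union_left)
    have hA''C : A'' ∈ C' := by rw [this]; exact Or.inr rfl
    have := hone A'' hA''C
    have : y ∈ A.1 := by
      rw [← this]
      exact Finset.mem_insert_self y _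
    exact hyA this
  obtain ⟨A', hA', hA'ne⟩ := htwo
  -- Stage D : classification of C' as star or top
  have hadjAA' : (JohnsonGraph l m).Adj A' A := hC'clique hA' hA hA'ne
  have hMcard : (A.1 ∩ A'.1).card = m - 1 := by
    have := hadjAA'.2
    rwa [Finset.inter_comm] at this
  have hNcard : (A.1 ∪ A'.1).card = m + 1 := by
    have := Finset.card_union_add_card_inter A.1 A'.1
    rw [A.2, A'.2, hMcard] at this
    omega
  have hTri : ∀ B ∈ C', A.1 ∩ A'.1 ⊆ B.1 ∨ B.1 ⊆ A.1 ∪ A'.1 := by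
    intro B hB
    by_cases hBA : B = A
    · left; rw [hBA]; exact Finset.inter_subset_left
    by_cases hBA' : B = A'
    · left; rw [hBA']; exact Finset.inter_subset_right
    · exact johnson_trichotomy hm2' B.2 A.2 A'.2 (hC'clique hB hA hBA).2
        (hC'clique hB hA' hBA').2 hMcard
  have hclass : (∀ B ∈ C', A.1 ∩ A'.1 ⊆ B.1) ∨ (∀ B ∈ C', B.1 ⊆ A.1 ∪ A'.1) := by
    by_contra hcon
    push_neg at hcon
    obtain ⟨⟨B1, hB1, hB1n⟩, ⟨B2, hB2, hB2n⟩⟩ := hcon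
    have hB1A : B1 ≠ A := fun h => hB1n (by rw [h]; exact Finset.inter_subset_left)
    have hB1A' : B1 ≠ A' := fun h => hB1n (by rw [h]; exact Finset.inter_subset_right)
    have hB2A : B2 ≠ A := fun h => hB2n (by rw [h]; exact Finset.subset_union_left)
    have hB2A' : B2 ≠ A' := fun h => hB2n (by rw [h]; exact Finset.subset_union_right)
    have hB1B2 : B1 ≠ B2 := fun h => hB1n (by rw [h]; exact (hTri B2 hB2).resolve_right hB2n)
    have hB2M : A.1 ∩ A'.1 ⊆ B2.1 := (hTri B2 hB2).resolve_right hB2n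
    have hAB2 : A.1 ∩ A'.1 = A.1 ∩ B2.1 := by
      apply Finset.eq_of_subset_of_card_le (Finset.subset_inter Finset.inter_subset_left hB2M)
      rw [hMcard, (hC'clique hA hB2 (Ne.symm hB2A)).2]
    have hA'B2 : A.1 ∩ A'.1 = A'.1 ∩ B2.1 := by
      apply Finset.eq_of_subset_of_card_le (Finset.subset_inter Finset.inter_subset_right hB2M)
      rw [hMcard, (hC'clique hA' hB2 (Ne.symm hB2A')).2]
    have tri1 : B1.1 ⊆ A.1 ∪ B2.1 := by
      refine (johnson_trichotomy hm2' B1.2 A.2 B2.2 (hC'clique hB1 hA hB1A).2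
        (hC'clique hB1 hB2 hB1B2).2 (by rw [← hAB2, hMcard])).resolve_left ?_
      intro h
      exact hB1n (by rw [hAB2]; exact h)
    have tri2 : B1.1 ⊆ A'.1 ∪ B2.1 := by
      refine (johnson_trichotomy hm2' B1.2 A'.2 B2.2 (hC'clique hB1 hA' hB1A').2
        (hC'clique hB1 hB2 hB1B2).2 (by rw [← hA'B2, hMcard])).resolve_left ?_
      intro h
      exact hB1n (by rw [hA'B2]; exact h)
    have hB1sub : B1.1 ⊆ B2.1 := by
      intro x hx
      rcases Finset.mem_union.1 (tri1 hx) with h1 | h1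
      · rcases Finset.mem_union.1 (tri2 hx) with h2 | h2
        · exact hB2M (Finset.mem_inter.2 ⟨h1, h2⟩)
        · exact h2
      · exact h1
    have hB1eq : B1.1 = B2.1 := Finset.eq_of_subset_of_card_le hB1sub (by rw [B1.2, B2.2])
    exact hB1n (by rw [hB1eq]; exact hB2M)
  -- Stage E : three elements of C' and a special vertex W'
  obtain ⟨A1, A2, A3, hA1, hA2, hA3, h12, h13, h23, W', hW1, hW2, hW3⟩ :
      ∃ A1 A2 A3 : {A : Finset (Fin l) // A.card = m}, A1 ∈ C' ∧ A2 ∈ C' ∧ A3 ∈ C' ∧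
        A1 ≠ A2 ∧ A1 ≠ A3 ∧ A2 ≠ A3 ∧
        ∃ W' : {A : Finset (Fin l) // A.card = m},
          (W'.1 ∩ A1.1).card = m - 1 ∧ (W'.1 ∩ A2.1).card = m - 1 ∧
          (W'.1 ∩ A3.1).card = m - 2 := by
    rcases hclass with hstar | htop
    · -- star case
      set M : Finset (Fin l) := A.1 ∩ A'.1 with hMdef
      have hCeq : C' = {B : {A : Finset (Fin l) // A.card = m} | M ⊆ B.1} := by
        apply hC'max
        · intro B hB B' hB' hne
          have hle : m - 1 ≤ (B.1 ∩ B'.1).card := by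
            rw [← hMcard]
            exact Finset.card_le_card (Finset.subset_inter hB hB')
          have hlt : (B.1 ∩ B'.1).card < m := by
            rcases Nat.lt_or_ge (B.1 ∩ B'.1).card m with h | h
            · exact h
            · exfalso
              have h1 : B.1 ∩ B'.1 = B.1 := Finset.eq_of_subset_of_card_le
                Finset.inter_subset_left (by rw [B.2]; exact h)
              have h2 : B.1 ⊆ B'.1 := by rw [← h1]; exact Finset.inter_subset_right
              exact hne (Subtype.ext (Finset.eq_of_subset_of_card_le h2 (by rw [B.2, B'.2])))
          exact johnson_adj_of_card (by omega) (by omega)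
        · exact hstar
      obtain ⟨t, htsub, htcard⟩ := Finset.exists_subset_card_eq (s := (Mᶜ : Finset (Fin l))) (n := 3)
        (by rw [Finset.card_compl, hMcard]; simp only [Fintype.card_fin]; omega)
      obtain ⟨x1, x2, x3, hx12, hx13, hx23, rfl⟩ := Finset.card_eq_three.1 htcard
      have hx1M : x1 ∉ M := Finset.mem_compl.1 (htsub (by simp))
      have hx2M : x2 ∉ M := Finset.mem_compl.1 (htsub (by simp))
      have hx3M : x3 ∉ M := Finset.mem_compl.1 (htsub (by simp))
      obtain ⟨y, hyM⟩ : M.Nonempty := by rw [← Finset.card_pos, hMcard]; omega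
      have hcard1 : (insert x1 M).card = m := by
        rw [Finset.card_insert_of_notMem hx1M, hMcard]; omega
      have hcard2 : (insert x2 M).card = m := by
        rw [Finset.card_insert_of_notMem hx2M, hMcard]; omega
      have hcard3 : (insert x3 M).card = m := by
        rw [Finset.card_insert_of_notMem hx3M, hMcard]; omega
      have hx2ey : x2 ∉ M.erase y := fun h => hx2M (Finset.mem_of_mem_erase h)
      have hx1i : x1 ∉ insert x2 (M.erase y) := by
        simp only [Finset.mem_insert]
        rintro (h | h)
        · exact hx12 h
        · exact hx1M (Finset.mem_of_mem_erase h)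
      have hcardW : (insert x1 (insert x2 (M.erase y))).card = m := by
        rw [Finset.card_insert_of_notMem hx1i, Finset.card_insert_of_notMem hx2ey,
          Finset.card_erase_of_mem hyM, hMcard]
        omega
      have heycard : (M.erase y).card = m - 2 := by
        rw [Finset.card_erase_of_mem hyM, hMcard]; omega
      refine ⟨⟨insert x1 M, hcard1⟩, ⟨insert x2 M, hcard2⟩, ⟨insert x3 M, hcard3⟩,
        ?_, ?_, ?_, ?_, ?_, ?_, ⟨insert x1 (insert x2 (M.erase y)), hcardW⟩, ?_, ?_, ?_⟩
      · rw [hCeq]; exact Finset.subset_insert x1 M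
      · rw [hCeq]; exact Finset.subset_insert x2 M
      · rw [hCeq]; exact Finset.subset_insert x3 M
      · intro h
        rw [Subtype.mk.injEq] at h
        have : x1 ∈ insert x2 M := by rw [← h]; exact Finset.mem_insert_self x1 M
        rcases Finset.mem_insert.1 this with h | h
        · exact hx12 h
        · exact hx1M h
      · intro h
        rw [Subtype.mk.injEq] at h
        have : x1 ∈ insert x3 M := by rw [← h]; exact Finset.mem_insert_self x1 M
        rcases Finset.mem_insert.1 this with h | h
        · exact hx13 h
        · exact hx1M h
      · intro h
        rw [Subtype.mk.injEq] at h
        have : x2 ∈ insert x3 M := by rw [← h]; exact Finset.mem_insert_self x2 M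
        rcases Finset.mem_insert.1 this with h | h
        · exact hx23 h
        · exact hx2M h
      · -- W' ∩ A1
        show ((insert x1 (insert x2 (M.erase y))) ∩ (insert x1 M)).card = m - 1
        have hx2n : x2 ∉ insert x1 M := by
          simp only [Finset.mem_insert]
          rintro (h | h)
          · exact hx12 h.symm
          · exact hx2M h
        have hx1e : x1 ∉ M.erase y := fun h => hx1M (Finset.mem_of_mem_erase h)
        rw [Finset.insert_inter_of_mem (Finset.mem_insert_self x1 M),
          Finset.insert_inter_of_notMem hx2n, Finset.inter_insert_of_notMem hx1e,
          Finset.erase_inter, Finset.inter_self, Finset.card_insert_of_notMem hx1e,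
          heycard]
        omega
      · -- W' ∩ A2
        show ((insert x1 (insert x2 (M.erase y))) ∩ (insert x2 M)).card = m - 1
        have hx1n : x1 ∉ insert x2 M := by
          simp only [Finset.mem_insert]
          rintro (h | h)
          · exact hx12 h
          · exact hx1M h
        rw [Finset.insert_inter_of_notMem hx1n,
          Finset.insert_inter_of_mem (Finset.mem_insert_self x2 M),
          Finset.inter_insert_of_notMem hx2ey, Finset.erase_inter, Finset.inter_self,
          Finset.card_insert_of_notMem hx2ey, heycard]
        omega
      · -- W' ∩ A3
        show ((insert x1 (insert x2 (M.erase y))) ∩ (insert x3 M)).card = m - 2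
        have hx1n : x1 ∉ insert x3 M := by
          simp only [Finset.mem_insert]
          rintro (h | h)
          · exact hx13 h
          · exact hx1M h
        have hx2n : x2 ∉ insert x3 M := by
          simp only [Finset.mem_insert]
          rintro (h | h)
          · exact hx23 h
          · exact hx2M h
        have hx3e : x3 ∉ M.erase y := fun h => hx3M (Finset.mem_of_mem_erase h)
        rw [Finset.insert_inter_of_notMem hx1n, Finset.insert_inter_of_notMem hx2n,
          Finset.inter_insert_of_notMem hx3e, Finset.erase_inter, Finset.inter_self,
          heycard]
    · -- top case
      set N : Finset (Fin l) := A.1 ∪ A'.1 with hNdef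
      have hCeq : C' = {B : {A : Finset (Fin l) // A.card = m} | B.1 ⊆ N} := by
        apply hC'max
        · intro B hB B' hB' hne
          have hu : (B.1 ∪ B'.1).card ≤ m + 1 := by
            rw [← hNcard]
            exact Finset.card_le_card (Finset.union_subset hB hB')
          have hkey := Finset.card_union_add_card_inter B.1 B'.1
          rw [B.2, B'.2] at hkey
          have hlt : (B.1 ∩ B'.1).card < m := by
            rcases Nat.lt_or_ge (B.1 ∩ B'.1).card m with h | h
            · exact h
            · exfalso
              have h1 : B.1 ∩ B'.1 = B.1 := Finset.eq_of_subset_of_card_le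
                Finset.inter_subset_left (by rw [B.2]; exact h)
              have h2 : B.1 ⊆ B'.1 := by rw [← h1]; exact Finset.inter_subset_right
              exact hne (Subtype.ext (Finset.eq_of_subset_of_card_le h2 (by rw [B.2, B'.2])))
          exact johnson_adj_of_card (by omega) (by omega)
        · exact htop
      obtain ⟨t, htsub, htcard⟩ := Finset.exists_subset_card_eq (s := N) (n := 3) (by rw [hNcard]; omega)
      obtain ⟨x1, x2, x3, hx12, hx13, hx23, rfl⟩ := Finset.card_eq_three.1 htcard
      have hx1N : x1 ∈ N := htsub (by simp)
      have hx2N : x2 ∈ N := htsub (by simp)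
      have hx3N : x3 ∈ N := htsub (by simp)
      obtain ⟨z, hz⟩ : (Nᶜ : Finset (Fin l)).Nonempty := by
        rw [← Finset.card_pos, Finset.card_compl, hNcard]
        simp only [Fintype.card_fin]; omega
      have hzN : z ∉ N := Finset.mem_compl.1 hz
      have hcard1 : (N.erase x1).card = m := by
        rw [Finset.card_erase_of_mem hx1N, hNcard]; omega
      have hcard2 : (N.erase x2).card = m := by
        rw [Finset.card_erase_of_mem hx2N, hNcard]; omega
      have hcard3 : (N.erase x3).card = m := by
        rw [Finset.card_erase_of_mem hx3N, hNcard]; omega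
      have hx2e : x2 ∈ N.erase x1 := Finset.mem_erase.2 ⟨Ne.symm hx12, hx2N⟩
      have hscard : ((N.erase x1).erase x2).card = m - 1 := by
        rw [Finset.card_erase_of_mem hx2e, hcard1]
      have hzs : z ∉ (N.erase x1).erase x2 := fun h =>
        hzN (Finset.mem_of_mem_erase (Finset.mem_of_mem_erase h))
      have hcardW : (insert z ((N.erase x1).erase x2)).card = m := by
        rw [Finset.card_insert_of_notMem hzs, hscard]; omega
      refine ⟨⟨N.erase x1, hcard1⟩, ⟨N.erase x2, hcard2⟩, ⟨N.erase x3, hcard3⟩,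
        ?_, ?_, ?_, ?_, ?_, ?_, ⟨insert z ((N.erase x1).erase x2), hcardW⟩, ?_, ?_, ?_⟩
      · rw [hCeq]; exact Finset.erase_subset x1 N
      · rw [hCeq]; exact Finset.erase_subset x2 N
      · rw [hCeq]; exact Finset.erase_subset x3 N
      · intro h
        rw [Subtype.mk.injEq] at h
        have : x2 ∈ N.erase x2 := by rw [← h]; exact hx2e
        exact (Finset.mem_erase.1 this).1 rfl
      · intro h
        have hx3e : x3 ∈ N.erase x1 := Finset.mem_erase.2 ⟨Ne.symm hx13, hx3N⟩
        rw [Subtype.mk.injEq] at h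
        have : x3 ∈ N.erase x3 := by rw [← h]; exact hx3e
        exact (Finset.mem_erase.1 this).1 rfl
      · intro h
        have hx3e : x3 ∈ N.erase x2 := Finset.mem_erase.2 ⟨Ne.symm hx23, hx3N⟩
        rw [Subtype.mk.injEq] at h
        have : x3 ∈ N.erase x3 := by rw [← h]; exact hx3e
        exact (Finset.mem_erase.1 this).1 rfl
      · -- W' ∩ A1
        show ((insert z ((N.erase x1).erase x2)) ∩ (N.erase x1)).card = m - 1
        have hzn : z ∉ N.erase x1 := fun h => hzN (Finset.mem_of_mem_erase h)
        rw [Finset.insert_inter_of_notMem hzn,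
          Finset.inter_eq_left.2 (Finset.erase_subset x2 (N.erase x1)), hscard]
      · -- W' ∩ A2
        show ((insert z ((N.erase x1).erase x2)) ∩ (N.erase x2)).card = m - 1
        have hzn : z ∉ N.erase x2 := fun h => hzN (Finset.mem_of_mem_erase h)
        rw [Finset.insert_inter_of_notMem hzn, Finset.erase_right_comm,
          Finset.inter_eq_left.2 (Finset.erase_subset x1 (N.erase x2))]
        rw [Finset.erase_right_comm, hscard]
      · -- W' ∩ A3
        show ((insert z ((N.erase x1).erase x2)) ∩ (N.erase x3)).card = m - 2
        have hzn : z ∉ N.erase x3 := fun h => hzN (Finset.mem_of_mem_erase h)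
        have hx3s : x3 ∈ (N.erase x1).erase x2 :=
          Finset.mem_erase.2 ⟨Ne.symm hx23, Finset.mem_erase.2 ⟨Ne.symm hx13, hx3N⟩⟩
        rw [Finset.insert_inter_of_notMem hzn, Finset.inter_erase,
          Finset.inter_eq_left.2 (fun w hw => Finset.mem_of_mem_erase (Finset.mem_of_mem_erase hw)),
          Finset.card_erase_of_mem hx3s, hscard]
        omega
  -- Stage F : Grassmann geometry
  have hk2' : 2 ≤ k := hk1
  have hS1C : f A1 ∈ C := by rw [hCim]; exact ⟨A1, hA1, rfl⟩
  have hS2C : f A2 ∈ C := by rw [hCim]; exact ⟨A2, hA2, rfl⟩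
  have hS3C : f A3 ∈ C := by rw [hCim]; exact ⟨A3, hA3, rfl⟩
  have adj12 : (GrassmannGraph K V k).Adj (f A1) (f A2) := hC hS1C hS2C (fne h12)
  have adj13 : (GrassmannGraph K V k).Adj (f A1) (f A3) := hC hS1C hS3C (fne h13)
  have adj23 : (GrassmannGraph K V k).Adj (f A2) (f A3) := hC hS2C hS3C (fne h23)
  have adjW1 : (GrassmannGraph K V k).Adj (f W') (f A1) :=
    fadj (johnson_adj_of_card (by omega) hW1)
  have adjW2 : (GrassmannGraph K V k).Adj (f W') (f A2) :=
    fadj (johnson_adj_of_card (by omega) hW2)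
  obtain ⟨Wne3, Wnadj3⟩ := fdist2 hW3
  have dX : finrank K ↥((f A1).1 ⊓ (f A2).1) = k - 1 := adj12.2
  have dY : finrank K ↥((f A1).1 ⊔ (f A2).1) = k + 1 :=
    grass_finrank_sup (by omega) (f A1).2 (f A2).2 dX
  have hS3cases := grass_trichotomy hk2' (f A3).2 (f A1).2 (f A2).2 adj13.symm.2 adj23.symm.2 dX
  have hWcases := grass_trichotomy hk2' (f W').2 (f A1).2 (f A2).2 adjW1.2 adjW2.2 dX
  have hnotboth : ¬ ((f A1).1 ⊓ (f A2).1 ≤ (f A3).1 ∧ (f A3).1 ≤ (f A1).1 ⊔ (f A2).1) := by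
    rintro ⟨h1, h2⟩
    have hge : k - 1 ≤ finrank K ↥((f W').1 ⊓ (f A3).1) := by
      rcases hWcases with hw | hw
      · have hle : (f A1).1 ⊓ (f A2).1 ≤ (f W').1 ⊓ (f A3).1 := le_inf hw h1
        have := Submodule.finrank_mono (R:=K) hle
        rwa [dX] at this
      · have hsle : (f W').1 ⊔ (f A3).1 ≤ (f A1).1 ⊔ (f A2).1 := sup_le hw h2
        have h4 : finrank K ↥((f W').1 ⊔ (f A3).1) ≤ k + 1 := by
          have := Submodule.finrank_mono (R:=K) hsle; rwa [dY] at this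
        have key := Submodule.finrank_sup_add_finrank_inf_eq (f W').1 (f A3).1
        rw [(f W').2, (f A3).2] at key
        omega
    rcases grass_eq_or_adj (by omega) hge with h | h
    · exact Wne3 h
    · exact Wnadj3 h
  have hkey : ∃ D0, ∀ D, (GrassmannGraph K V k).IsClique D →
      (∀ E, (GrassmannGraph K V k).IsClique E → D ⊆ E → D = E) → C ⊆ D → D = D0 := by
    rcases hS3cases with hcase | hcase
    · -- star case : X ≤ S3 and ¬ (S3 ≤ Y)
      have hnotY : ¬ (f A3).1 ≤ (f A1).1 ⊔ (f A2).1 := fun h => hnotboth ⟨hcase, h⟩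
      refine ⟨{T | (f A1).1 ⊓ (f A2).1 ≤ T.1}, ?_⟩
      intro D hD hDmax hCD
      have hD0clique : (GrassmannGraph K V k).IsClique
          {T : {S : Submodule K V // finrank K S = k} | (f A1).1 ⊓ (f A2).1 ≤ T.1} := by
        intro T hT T' hT' hne
        have hge : k - 1 ≤ finrank K ↥(T.1 ⊓ T'.1) := by
          have := Submodule.finrank_mono (R:=K) (le_inf hT hT')
          rwa [dX] at this
        exact (grass_eq_or_adj (by omega) hge).resolve_left hne
      apply hDmax _ hD0clique
      intro T hT
      show (f A1).1 ⊓ (f A2).1 ≤ T.1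
      by_cases e1 : T = f A1
      · rw [e1]; exact inf_le_left
      by_cases e2 : T = f A2
      · rw [e2]; exact inf_le_right
      by_cases e3 : T = f A3
      · rw [e3]; exact hcase
      have adjT1 := hD hT (hCD hS1C) e1
      have adjT2 := hD hT (hCD hS2C) e2
      have adjT3 := hD hT (hCD hS3C) e3
      rcases grass_trichotomy hk2' T.2 (f A1).2 (f A2).2 adjT1.2 adjT2.2 dX with h | hTY
      · exact h
      have hX13 : (f A1).1 ⊓ (f A3).1 = (f A1).1 ⊓ (f A2).1 := by
        apply (Submodule.eq_of_le_of_finrank_eq (le_inf inf_le_left hcase) ?_).symm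
        rw [dX, adj13.2]
      rcases grass_trichotomy hk2' T.2 (f A1).2 (f A3).2 adjT1.2 adjT3.2 adj13.2 with h | hTY'
      · rw [hX13] at h; exact h
      have dY' : finrank K ↥((f A1).1 ⊔ (f A3).1) = k + 1 :=
        grass_finrank_sup (by omega) (f A1).2 (f A3).2 adj13.2
      have hne' : ((f A1).1 ⊔ (f A2).1) ⊓ ((f A1).1 ⊔ (f A3).1) = (f A1).1 := by
        have hle1 : (f A1).1 ≤ ((f A1).1 ⊔ (f A2).1) ⊓ ((f A1).1 ⊔ (f A3).1) :=
          le_inf le_sup_left le_sup_left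
        have hfr : finrank K ↥(((f A1).1 ⊔ (f A2).1) ⊓ ((f A1).1 ⊔ (f A3).1)) ≤ k := by
          by_contra hgt
          push_neg at hgt
          have hle2 : ((f A1).1 ⊔ (f A2).1) ⊓ ((f A1).1 ⊔ (f A3).1) ≤ (f A1).1 ⊔ (f A2).1 :=
            inf_le_left
          have e1 : ((f A1).1 ⊔ (f A2).1) ⊓ ((f A1).1 ⊔ (f A3).1) = (f A1).1 ⊔ (f A2).1 := by
            apply Submodule.eq_of_le_of_finrank_le hle2
            rw [dY]; omega
          have hYY' : (f A1).1 ⊔ (f A2).1 ≤ (f A1).1 ⊔ (f A3).1 := by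
            rw [← e1]; exact inf_le_right
          have hfin : (f A1).1 ⊔ (f A2).1 = (f A1).1 ⊔ (f A3).1 :=
            Submodule.eq_of_le_of_finrank_eq hYY' (by rw [dY, dY'])
          exact hnotY (by rw [hfin]; exact le_sup_right)
        exact (Submodule.eq_of_le_of_finrank_le hle1 (by rw [(f A1).2]; exact hfr)).symm
      have hTS1 : T.1 ≤ (f A1).1 := by rw [← hne']; exact le_inf hTY hTY'
      have hTeq : T.1 = (f A1).1 :=
        Submodule.eq_of_le_of_finrank_eq hTS1 (by rw [T.2, (f A1).2])
      rw [hTeq]; exact inf_le_left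
    · -- top case : S3 ≤ Y and ¬ (X ≤ S3)
      have hnotX : ¬ (f A1).1 ⊓ (f A2).1 ≤ (f A3).1 := fun h => hnotboth ⟨h, hcase⟩
      refine ⟨{T | T.1 ≤ (f A1).1 ⊔ (f A2).1}, ?_⟩
      intro D hD hDmax hCD
      have hD0clique : (GrassmannGraph K V k).IsClique
          {T : {S : Submodule K V // finrank K S = k} | T.1 ≤ (f A1).1 ⊔ (f A2).1} := by
        intro T hT T' hT' hne
        have hge : k - 1 ≤ finrank K ↥(T.1 ⊓ T'.1) := by
          have hsle : T.1 ⊔ T'.1 ≤ (f A1).1 ⊔ (f A2).1 := sup_le hT hT'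
          have h4 : finrank K ↥(T.1 ⊔ T'.1) ≤ k + 1 := by
            have := Submodule.finrank_mono (R:=K) hsle; rwa [dY] at this
          have key := Submodule.finrank_sup_add_finrank_inf_eq T.1 T'.1
          rw [T.2, T'.2] at key
          omega
        exact (grass_eq_or_adj (by omega) hge).resolve_left hne
      apply hDmax _ hD0clique
      intro T hT
      show T.1 ≤ (f A1).1 ⊔ (f A2).1
      by_cases e1 : T = f A1
      · rw [e1]; exact le_sup_left
      by_cases e2 : T = f A2
      · rw [e2]; exact le_sup_right
      by_cases e3 : T = f A3
      · rw [e3]; exact hcase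
      have adjT1 := hD hT (hCD hS1C) e1
      have adjT2 := hD hT (hCD hS2C) e2
      have adjT3 := hD hT (hCD hS3C) e3
      rcases grass_trichotomy hk2' T.2 (f A1).2 (f A2).2 adjT1.2 adjT2.2 dX with hXT | h
      swap
      · exact h
      have hY13 : (f A1).1 ⊔ (f A3).1 = (f A1).1 ⊔ (f A2).1 := by
        apply Submodule.eq_of_le_of_finrank_eq (sup_le le_sup_left hcase)
        rw [dY, grass_finrank_sup (by omega) (f A1).2 (f A3).2 adj13.2]
      rcases grass_trichotomy hk2' T.2 (f A1).2 (f A3).2 adjT1.2 adjT3.2 adj13.2 with hXT' | h'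
      swap
      · rw [hY13] at h'; exact h'
      have hXX'ne : (f A1).1 ⊓ (f A2).1 ≠ (f A1).1 ⊓ (f A3).1 := by
        intro h
        exact hnotX (by rw [h]; exact inf_le_right)
      have hXinfle : ((f A1).1 ⊓ (f A2).1) ⊓ ((f A1).1 ⊓ (f A3).1) ≤ (f A1).1 ⊓ (f A2).1 :=
        inf_le_left
      have hfrXX' : finrank K ↥(((f A1).1 ⊓ (f A2).1) ⊓ ((f A1).1 ⊓ (f A3).1)) ≤ k - 2 := by
        have hle := Submodule.finrank_mono (R:=K) hXinfle
        rw [dX] at hle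
        rcases Nat.lt_or_ge (finrank K ↥(((f A1).1 ⊓ (f A2).1) ⊓ ((f A1).1 ⊓ (f A3).1)))
          (k - 1) with hh | hh
        · omega
        · exfalso
          have heq : ((f A1).1 ⊓ (f A2).1) ⊓ ((f A1).1 ⊓ (f A3).1) = (f A1).1 ⊓ (f A2).1 :=
            Submodule.eq_of_le_of_finrank_le hXinfle (by rw [dX]; omega)
          have hXle : (f A1).1 ⊓ (f A2).1 ≤ (f A1).1 ⊓ (f A3).1 := by
            rw [← heq]; exact inf_le_right
          exact hXX'ne (Submodule.eq_of_le_of_finrank_eq hXle (by rw [dX, adj13.2]))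
      have hkey2 := Submodule.finrank_sup_add_finrank_inf_eq
        ((f A1).1 ⊓ (f A2).1) ((f A1).1 ⊓ (f A3).1)
      rw [dX, adj13.2] at hkey2
      have hsuple : ((f A1).1 ⊓ (f A2).1) ⊔ ((f A1).1 ⊓ (f A3).1) ≤ (f A1).1 :=
        sup_le inf_le_left inf_le_left
      have hfrsup : finrank K ↥(((f A1).1 ⊓ (f A2).1) ⊔ ((f A1).1 ⊓ (f A3).1)) ≤ k := by
        have := Submodule.finrank_mono (R:=K) hsuple
        rwa [(f A1).2] at this
      have heqS1 : ((f A1).1 ⊓ (f A2).1) ⊔ ((f A1).1 ⊓ (f A3).1) = (f A1).1 :=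
        Submodule.eq_of_le_of_finrank_le hsuple (by rw [(f A1).2]; omega)
      have hS1T : (f A1).1 ≤ T.1 := by rw [← heqS1]; exact sup_le hXT hXT'
      have hTeq : T.1 = (f A1).1 :=
        (Submodule.eq_of_le_of_finrank_eq hS1T (by rw [(f A1).2, T.2])).symm
      rw [hTeq]; exact le_sup_left
  -- Final assembly : Zorn + uniqueness
  obtain ⟨D0, hD0⟩ := hkey
  have hzorn : ∃ Dm, C ⊆ Dm ∧
      Maximal (fun D => (GrassmannGraph K V k).IsClique D) Dm := by
    apply zorn_subset_nonempty
    · intro c hcS hchain hcne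
      refine ⟨⋃₀ c, ?_, fun s hs => Set.subset_sUnion_of_mem hs⟩
      intro x hx y hy hxy
      obtain ⟨s, hs, hxs⟩ := hx
      obtain ⟨t, ht, hyt⟩ := hy
      rcases eq_or_ne s t with rfl | hst
      · exact (hcS hs) hxs hyt hxy
      · rcases hchain hs ht hst with h | h
        · exact (hcS ht) (h hxs) hyt hxy
        · exact (hcS hs) hxs (h hyt) hxy
    · exact hC
  obtain ⟨Dm, hCDm, hDmmem, hDmmax⟩ := hzorn
  have hDmmaxE : ∀ E, (GrassmannGraph K V k).IsClique E → Dm ⊆ E → Dm = E :=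
    fun E hE hsub => Set.Subset.antisymm hsub (hDmmax hE hsub)
  refine ⟨Dm, ⟨hDmmem, hDmmaxE, hCDm⟩, ?_⟩
  rintro D' ⟨h1, h2, h3⟩
  rw [hD0 D' h1 h2 h3, hD0 Dm hDmmem hDmmaxE hCDm]
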